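/- Let G be a (bull, E)-free graph and let Q = v_1 v_2 v_3 v_4 v_5 v_1 be an induced 5-cycle in G which is a smallest induced odd cycle of G. If w ∈ A_i and w' ∈ A_{i+2} ∪ A_{i+3} ∪ B_i ∪ B_{i+3} ∪ C_i ∪ C_{i+1} ∪ C_{i+2} ∪ C_{i+3}, then ww' is not an edge of G. -/
import Mathlib


/-- `H` is contained in `G` as an induced subgraph. -/
def ContainsInduced {α β : Type*} (H : SimpleGraph α) (G : SimpleGraph β) : Prop :=
  ∃ f : α ↪ β, ∀ a b, G.Adj (f a) (f b) ↔ H.Adj a b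

/-- The graph `E = S_{1,2,2}`: centre `0`, leaf `1`, and the paths `0 2 3` and `0 4 5`. -/
def graphE : SimpleGraph (Fin 6) :=
  SimpleGraph.fromRel (fun a b =>
    ((a : ℕ), (b : ℕ)) ∈ [(0, 1), (0, 2), (2, 3), (0, 4), (4, 5)])

/-- The bull: a triangle `v2 v3 v4` with pendant edges `v1 v2` and `v4 v5`. -/
def bull : SimpleGraph (Fin 5) :=
  SimpleGraph.fromRel (fun a b =>
    ((a : ℕ), (b : ℕ)) ∈ [(0, 1), (1, 2), (2, 3), (3, 4), (1, 3)])

/-- `u : ZMod k → V` lists the vertices (in cyclic order) of an induced cycle of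
length `k` in `G`. -/
def IsInducedCycle {V : Type*} (G : SimpleGraph V) {k : ℕ} (u : ZMod k → V) : Prop :=
  Function.Injective u ∧ ∀ i j : ZMod k, G.Adj (u i) (u j) ↔ (j = i + 1 ∨ i = j + 1)

/-- `v : ZMod p → V` is a smallest induced odd cycle of `G` of length `p ≥ 5`:
an induced odd cycle of length `p ≥ 5` such that `G` has no induced odd cycle of
length `k` with `5 ≤ k < p`. -/
def IsSmallestInducedOddCycle {V : Type*} (G : SimpleGraph V) {p : ℕ}
    (v : ZMod p → V) : Prop :=
  5 ≤ p ∧ Odd p ∧ IsInducedCycle G v ∧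
    ∀ k : ℕ, 5 ≤ k → k < p → Odd k → ∀ u : ZMod k → V, ¬ IsInducedCycle G u

/-- `A_i`: the vertices outside the cycle `Q` whose neighbourhood on `Q` is
exactly `{v_i}`. -/
def setA {V : Type*} (G : SimpleGraph V) {p : ℕ} (v : ZMod p → V) (i : ZMod p) :
    Set V :=
  {w | w ∉ Set.range v ∧ ∀ j : ZMod p, G.Adj w (v j) ↔ j = i}

/-- `B_i`: the vertices outside the cycle `Q` whose neighbourhood on `Q` is
exactly `{v_i, v_{i+2}}`. -/
def setB {V : Type*} (G : SimpleGraph V) {p : ℕ} (v : ZMod p → V) (i : ZMod p) :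
    Set V :=
  {w | w ∉ Set.range v ∧ ∀ j : ZMod p, G.Adj w (v j) ↔ (j = i ∨ j = i + 2)}

/-- `C_i`: the vertices outside the cycle `Q` whose neighbourhood on `Q` is
exactly `{v_i, v_{i+1}, v_{i+2}}`. -/
def setC {V : Type*} (G : SimpleGraph V) {p : ℕ} (v : ZMod p → V) (i : ZMod p) :
    Set V :=
  {w | w ∉ Set.range v ∧ ∀ j : ZMod p, G.Adj w (v j) ↔ (j = i ∨ j = i + 1 ∨ j = i + 2)}

/-- `D_i`: the vertices outside the cycle `Q` whose neighbourhood on `Q` is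
exactly `{v_i, v_{i+1}, v_{i+2}, v_{i+3}}`. -/
def setD {V : Type*} (G : SimpleGraph V) {p : ℕ} (v : ZMod p → V) (i : ZMod p) :
    Set V :=
  {w | w ∉ Set.range v ∧
    ∀ j : ZMod p, G.Adj w (v j) ↔ (j = i ∨ j = i + 1 ∨ j = i + 2 ∨ j = i + 3)}

/-- Let `G` be a `(bull, E)`-free graph and let `Q = v_1 … v_5 v_1` be an induced
5-cycle of `G` which is a smallest induced odd cycle of `G`.  If `w ∈ A_i` and
`w' ∈ A_{i+2} ∪ A_{i+3} ∪ B_i ∪ B_{i+3} ∪ C_i ∪ C_{i+1} ∪ C_{i+2} ∪ C_{i+3}`, then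
`w w'` is not an edge of `G`. -/
instance : DecidableRel bull.Adj := fun a b =>
  decidable_of_iff' _ (SimpleGraph.fromRel_adj _ a b)

instance : DecidableRel graphE.Adj := fun a b =>
  decidable_of_iff' _ (SimpleGraph.fromRel_adj _ a b)

lemma containsBull {V : Type*} (G : SimpleGraph V) (a b c d e : V)
    (h01 : G.Adj a b) (h12 : G.Adj b c) (h23 : G.Adj c d) (h34 : G.Adj d e) (h13 : G.Adj b d)
    (n02 : ¬G.Adj a c) (n03 : ¬G.Adj a d) (n04 : ¬G.Adj a e) (n14 : ¬G.Adj b e)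
    (n24 : ¬G.Adj c e)
    (d02 : a ≠ c) (d03 : a ≠ d) (d04 : a ≠ e) (d14 : b ≠ e) (d24 : c ≠ e) :
    ContainsInduced bull G := by
  have h10 := h01.symm; have h21 := h12.symm; have h32 := h23.symm; have h43 := h34.symm
  have h31 := h13.symm
  have n20 : ¬G.Adj c a := fun h => n02 h.symm
  have n30 : ¬G.Adj d a := fun h => n03 h.symm
  have n40 : ¬G.Adj e a := fun h => n04 h.symm
  have n41 : ¬G.Adj e b := fun h => n14 h.symm
  have n42 : ¬G.Adj e c := fun h => n24 h.symm
  have n00 : ¬G.Adj a a := G.irrefl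
  have n11 : ¬G.Adj b b := G.irrefl
  have n22 : ¬G.Adj c c := G.irrefl
  have n33 : ¬G.Adj d d := G.irrefl
  have n44 : ¬G.Adj e e := G.irrefl
  have d01 := h01.ne; have d12 := h12.ne; have d23 := h23.ne; have d34 := h34.ne
  have d13 := h13.ne
  have d10 := d01.symm; have d21 := d12.symm; have d32 := d23.symm; have d43 := d34.symm
  have d31 := d13.symm; have d20 := d02.symm; have d30 := d03.symm; have d40 := d04.symm
  have d41 := d14.symm; have d42 := d24.symm
  refine ⟨⟨![a,b,c,d,e], ?_⟩, ?_⟩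
  · intro x y hxy
    fin_cases x <;> fin_cases y <;>
      first
        | rfl
        | exact absurd hxy (by assumption)
  · intro p q
    fin_cases p <;> fin_cases q <;>
      first
        | exact iff_of_true (by assumption) (by decide)
        | exact iff_of_false (by assumption) (by decide)

lemma containsE {V : Type*} (G : SimpleGraph V) (a b c d e f : V)
    (h01 : G.Adj a b) (h02 : G.Adj a c) (h23 : G.Adj c d) (h04 : G.Adj a e)
    (h45 : G.Adj e f)
    (n03 : ¬G.Adj a d) (n05 : ¬G.Adj a f) (n12 : ¬G.Adj b c) (n13 : ¬G.Adj b d)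
    (n14 : ¬G.Adj b e) (n15 : ¬G.Adj b f) (n24 : ¬G.Adj c e) (n25 : ¬G.Adj c f)
    (n34 : ¬G.Adj d e) (n35 : ¬G.Adj d f)
    (d03 : a ≠ d) (d05 : a ≠ f) (d12 : b ≠ c) (d13 : b ≠ d) (d14 : b ≠ e)
    (d15 : b ≠ f) (d24 : c ≠ e) (d25 : c ≠ f) (d34 : d ≠ e) (d35 : d ≠ f) :
    ContainsInduced graphE G := by
  have h10 := h01.symm; have h20 := h02.symm; have h32 := h23.symm; have h40 := h04.symm
  have h54 := h45.symm
  have n30 : ¬G.Adj d a := fun h => n03 h.symm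
  have n50 : ¬G.Adj f a := fun h => n05 h.symm
  have n21 : ¬G.Adj c b := fun h => n12 h.symm
  have n31 : ¬G.Adj d b := fun h => n13 h.symm
  have n41 : ¬G.Adj e b := fun h => n14 h.symm
  have n51 : ¬G.Adj f b := fun h => n15 h.symm
  have n42 : ¬G.Adj e c := fun h => n24 h.symm
  have n52 : ¬G.Adj f c := fun h => n25 h.symm
  have n43 : ¬G.Adj e d := fun h => n34 h.symm
  have n53 : ¬G.Adj f d := fun h => n35 h.symm
  have n00 : ¬G.Adj a a := G.irrefl
  have n11 : ¬G.Adj b b := G.irrefl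
  have n22 : ¬G.Adj c c := G.irrefl
  have n33 : ¬G.Adj d d := G.irrefl
  have n44 : ¬G.Adj e e := G.irrefl
  have n55 : ¬G.Adj f f := G.irrefl
  have d01 := h01.ne; have d02 := h02.ne; have d23 := h23.ne; have d04 := h04.ne
  have d45 := h45.ne
  have d10 := d01.symm; have d20 := d02.symm; have d32 := d23.symm; have d40 := d04.symm
  have d54 := d45.symm; have d30 := d03.symm; have d50 := d05.symm; have d21 := d12.symm
  have d31 := d13.symm; have d41 := d14.symm; have d51 := d15.symm; have d42 := d24.symm
  have d52 := d25.symm; have d43 := d34.symm; have d53 := d35.symm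
  refine ⟨⟨![a,b,c,d,e,f], ?_⟩, ?_⟩
  · intro x y hxy
    fin_cases x <;> fin_cases y <;>
      first
        | rfl
        | exact absurd hxy (by assumption)
  · intro p q
    fin_cases p <;> fin_cases q <;>
      first
        | exact iff_of_true (by assumption) (by decide)
        | exact iff_of_false (by assumption) (by decide)

theorem A_far_no_edges {V : Type*} [Fintype V] (G : SimpleGraph V)
    (hbull : ¬ ContainsInduced bull G) (hE : ¬ ContainsInduced graphE G)
    (v : ZMod 5 → V) (hQ : IsSmallestInducedOddCycle G v)
    (i : ZMod 5) (w w' : V) (hw : w ∈ setA G v i)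
    (hw' : w' ∈ setA G v (i + 2) ∪ setA G v (i + 3) ∪ setB G v i ∪ setB G v (i + 3) ∪
      setC G v i ∪ setC G v (i + 1) ∪ setC G v (i + 2) ∪ setC G v (i + 3)) :
    ¬ G.Adj w w' := by
  intro hww'
  obtain ⟨hwr, hwadj⟩ := hw
  obtain ⟨-, -, ⟨hinj, hadj⟩, -⟩ := hQ
  have key : ∀ a b : ZMod 5, G.Adj (v (i + a)) (v (i + b)) ↔ (b = a + 1 ∨ a = b + 1) := by
    intro a b
    rw [hadj]
    simp only [add_assoc, add_left_cancel_iff]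
  have hwk : ∀ a : ZMod 5, G.Adj w (v (i + a)) ↔ a = 0 := by
    intro a
    rw [hwadj, add_eq_left]
  have hvne : ∀ a b : ZMod 5, a ≠ b → v (i + a) ≠ v (i + b) :=
    fun a b hab h => hab (add_left_cancel (hinj h))
  have hwv : ∀ a : ZMod 5, w ≠ v (i + a) := fun a h => hwr ⟨i + a, h.symm⟩
  have wAdj0 : G.Adj (v (i + 0)) w := ((hwk 0).mpr rfl).symm
  have wN : ∀ a : ZMod 5, a ≠ 0 → ¬ G.Adj w (v (i + a)) :=
    fun a h0 h => h0 ((hwk a).mp h)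
  rcases hw' with (((((((h | h) | h) | h) | h) | h) | h) | h)
  · -- w' ∈ A_{i+2} : E on (v_i, v_{i+1}, v_{i+4}, v_{i+3}, w, w')
    obtain ⟨hw'r, hw'adj⟩ := h
    have hw'k : ∀ a : ZMod 5, G.Adj w' (v (i + a)) ↔ a = 2 := by
      intro a; rw [hw'adj]; simp only [add_left_cancel_iff]
    have hw'v : ∀ a : ZMod 5, w' ≠ v (i + a) := fun a hh => hw'r ⟨i + a, hh.symm⟩
    exact hE (containsE G (v (i+0)) (v (i+1)) (v (i+4)) (v (i+3)) w w'
      ((key 0 1).mpr (by decide)) ((key 0 4).mpr (by decide)) ((key 4 3).mpr (by decide))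
      wAdj0 hww'
      (fun h => absurd ((key 0 3).mp h) (by decide))
      (fun h => absurd ((hw'k 0).mp h.symm) (by decide))
      (fun h => absurd ((key 1 4).mp h) (by decide))
      (fun h => absurd ((key 1 3).mp h) (by decide))
      (fun h => absurd ((hwk 1).mp h.symm) (by decide))
      (fun h => absurd ((hw'k 1).mp h.symm) (by decide))
      (fun h => absurd ((hwk 4).mp h.symm) (by decide))
      (fun h => absurd ((hw'k 4).mp h.symm) (by decide))
      (fun h => absurd ((hwk 3).mp h.symm) (by decide))
      (fun h => absurd ((hw'k 3).mp h.symm) (by decide))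
      (hvne 0 3 (by decide)) (hw'v 0).symm (hvne 1 4 (by decide)) (hvne 1 3 (by decide))
      (hwv 1).symm (hw'v 1).symm (hwv 4).symm (hw'v 4).symm (hwv 3).symm (hw'v 3).symm)
  · -- w' ∈ A_{i+3} : E on (v_i, v_{i+4}, v_{i+1}, v_{i+2}, w, w')
    obtain ⟨hw'r, hw'adj⟩ := h
    have hw'k : ∀ a : ZMod 5, G.Adj w' (v (i + a)) ↔ a = 3 := by
      intro a; rw [hw'adj]; simp only [add_left_cancel_iff]
    have hw'v : ∀ a : ZMod 5, w' ≠ v (i + a) := fun a hh => hw'r ⟨i + a, hh.symm⟩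
    exact hE (containsE G (v (i+0)) (v (i+4)) (v (i+1)) (v (i+2)) w w'
      ((key 0 4).mpr (by decide)) ((key 0 1).mpr (by decide)) ((key 1 2).mpr (by decide))
      wAdj0 hww'
      (fun h => absurd ((key 0 2).mp h) (by decide))
      (fun h => absurd ((hw'k 0).mp h.symm) (by decide))
      (fun h => absurd ((key 4 1).mp h) (by decide))
      (fun h => absurd ((key 4 2).mp h) (by decide))
      (fun h => absurd ((hwk 4).mp h.symm) (by decide))
      (fun h => absurd ((hw'k 4).mp h.symm) (by decide))
      (fun h => absurd ((hwk 1).mp h.symm) (by decide))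
      (fun h => absurd ((hw'k 1).mp h.symm) (by decide))
      (fun h => absurd ((hwk 2).mp h.symm) (by decide))
      (fun h => absurd ((hw'k 2).mp h.symm) (by decide))
      (hvne 0 2 (by decide)) (hw'v 0).symm (hvne 4 1 (by decide)) (hvne 4 2 (by decide))
      (hwv 4).symm (hw'v 4).symm (hwv 1).symm (hw'v 1).symm (hwv 2).symm (hw'v 2).symm)
  · -- w' ∈ B_i : bull on (v_{i+4}, v_i, w, w', v_{i+2})
    obtain ⟨hw'r, hw'adj⟩ := h
    have hw'k : ∀ a : ZMod 5, G.Adj w' (v (i + a)) ↔ (a = 0 ∨ a = 2) := by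
      intro a; rw [hw'adj]
      simp only [add_assoc, add_left_cancel_iff, add_eq_left]
    have hw'v : ∀ a : ZMod 5, w' ≠ v (i + a) := fun a hh => hw'r ⟨i + a, hh.symm⟩
    exact hbull (containsBull G (v (i+4)) (v (i+0)) w w' (v (i+2))
      ((key 4 0).mpr (by decide)) wAdj0 hww'
      ((hw'k 2).mpr (by decide)) ((hw'k 0).mpr (by decide)).symm
      (fun h => absurd ((hwk 4).mp h.symm) (by decide))
      (fun h => absurd ((hw'k 4).mp h.symm) (by decide))
      (fun h => absurd ((key 4 2).mp h) (by decide))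
      (fun h => absurd ((key 0 2).mp h) (by decide))
      (wN 2 (by decide))
      (hwv 4).symm (hw'v 4).symm (hvne 4 2 (by decide)) (hvne 0 2 (by decide)) (hwv 2))
  · -- w' ∈ B_{i+3} : bull on (v_{i+1}, v_i, w, w', v_{i+3})
    obtain ⟨hw'r, hw'adj⟩ := h
    have hw'k : ∀ a : ZMod 5, G.Adj w' (v (i + a)) ↔ (a = 3 ∨ a = 0) := by
      intro a; rw [hw'adj]
      simp only [add_assoc, add_left_cancel_iff]
      revert a; decide
    have hw'v : ∀ a : ZMod 5, w' ≠ v (i + a) := fun a hh => hw'r ⟨i + a, hh.symm⟩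
    exact hbull (containsBull G (v (i+1)) (v (i+0)) w w' (v (i+3))
      ((key 1 0).mpr (by decide)) wAdj0 hww'
      ((hw'k 3).mpr (by decide)) ((hw'k 0).mpr (by decide)).symm
      (fun h => absurd ((hwk 1).mp h.symm) (by decide))
      (fun h => absurd ((hw'k 1).mp h.symm) (by decide))
      (fun h => absurd ((key 1 3).mp h) (by decide))
      (fun h => absurd ((key 0 3).mp h) (by decide))
      (wN 3 (by decide))
      (hwv 1).symm (hw'v 1).symm (hvne 1 3 (by decide)) (hvne 0 3 (by decide)) (hwv 3))
  · -- w' ∈ C_i : bull on (v_{i+4}, v_i, w, w', v_{i+2})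
    obtain ⟨hw'r, hw'adj⟩ := h
    have hw'k : ∀ a : ZMod 5, G.Adj w' (v (i + a)) ↔ (a = 0 ∨ a = 1 ∨ a = 2) := by
      intro a; rw [hw'adj]
      simp only [add_assoc, add_left_cancel_iff, add_eq_left]
    have hw'v : ∀ a : ZMod 5, w' ≠ v (i + a) := fun a hh => hw'r ⟨i + a, hh.symm⟩
    exact hbull (containsBull G (v (i+4)) (v (i+0)) w w' (v (i+2))
      ((key 4 0).mpr (by decide)) wAdj0 hww'
      ((hw'k 2).mpr (by decide)) ((hw'k 0).mpr (by decide)).symm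
      (fun h => absurd ((hwk 4).mp h.symm) (by decide))
      (fun h => absurd ((hw'k 4).mp h.symm) (by decide))
      (fun h => absurd ((key 4 2).mp h) (by decide))
      (fun h => absurd ((key 0 2).mp h) (by decide))
      (wN 2 (by decide))
      (hwv 4).symm (hw'v 4).symm (hvne 4 2 (by decide)) (hvne 0 2 (by decide)) (hwv 2))
  · -- w' ∈ C_{i+1} : bull on (w, w', v_{i+2}, v_{i+3}, v_{i+4})
    obtain ⟨hw'r, hw'adj⟩ := h
    have hw'k : ∀ a : ZMod 5, G.Adj w' (v (i + a)) ↔ (a = 1 ∨ a = 2 ∨ a = 3) := by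
      intro a; rw [hw'adj]
      simp only [add_assoc, add_left_cancel_iff]
      revert a; decide
    have hw'v : ∀ a : ZMod 5, w' ≠ v (i + a) := fun a hh => hw'r ⟨i + a, hh.symm⟩
    exact hbull (containsBull G w w' (v (i+2)) (v (i+3)) (v (i+4))
      hww' ((hw'k 2).mpr (by decide)) ((key 2 3).mpr (by decide))
      ((key 3 4).mpr (by decide)) ((hw'k 3).mpr (by decide))
      (wN 2 (by decide)) (wN 3 (by decide)) (wN 4 (by decide))
      (fun h => absurd ((hw'k 4).mp h) (by decide))
      (fun h => absurd ((key 2 4).mp h) (by decide))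
      (hwv 2) (hwv 3) (hwv 4) (hw'v 4) (hvne 2 4 (by decide)))
  · -- w' ∈ C_{i+2} : bull on (w, w', v_{i+3}, v_{i+2}, v_{i+1})
    obtain ⟨hw'r, hw'adj⟩ := h
    have hw'k : ∀ a : ZMod 5, G.Adj w' (v (i + a)) ↔ (a = 2 ∨ a = 3 ∨ a = 4) := by
      intro a; rw [hw'adj]
      simp only [add_assoc, add_left_cancel_iff]
      revert a; decide
    have hw'v : ∀ a : ZMod 5, w' ≠ v (i + a) := fun a hh => hw'r ⟨i + a, hh.symm⟩
    exact hbull (containsBull G w w' (v (i+3)) (v (i+2)) (v (i+1))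
      hww' ((hw'k 3).mpr (by decide)) ((key 3 2).mpr (by decide))
      ((key 2 1).mpr (by decide)) ((hw'k 2).mpr (by decide))
      (wN 3 (by decide)) (wN 2 (by decide)) (wN 1 (by decide))
      (fun h => absurd ((hw'k 1).mp h) (by decide))
      (fun h => absurd ((key 3 1).mp h) (by decide))
      (hwv 3) (hwv 2) (hwv 1) (hw'v 1) (hvne 3 1 (by decide)))
  · -- w' ∈ C_{i+3} : bull on (v_{i+1}, v_i, w, w', v_{i+3})
    obtain ⟨hw'r, hw'adj⟩ := h
    have hw'k : ∀ a : ZMod 5, G.Adj w' (v (i + a)) ↔ (a = 3 ∨ a = 4 ∨ a = 0) := by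
      intro a; rw [hw'adj]
      simp only [add_assoc, add_left_cancel_iff]
      revert a; decide
    have hw'v : ∀ a : ZMod 5, w' ≠ v (i + a) := fun a hh => hw'r ⟨i + a, hh.symm⟩
    exact hbull (containsBull G (v (i+1)) (v (i+0)) w w' (v (i+3))
      ((key 1 0).mpr (by decide)) wAdj0 hww'
      ((hw'k 3).mpr (by decide)) ((hw'k 0).mpr (by decide)).symm
      (fun h => absurd ((hwk 1).mp h.symm) (by decide))
      (fun h => absurd ((hw'k 1).mp h.symm) (by decide))
      (fun h => absurd ((key 1 3).mp h) (by decide))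
      (fun h => absurd ((key 0 3).mp h) (by decide))
      (wN 3 (by decide))
      (hwv 1).symm (hw'v 1).symm (hvne 1 3 (by decide)) (hvne 0 3 (by decide)) (hwv 3))
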